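/- Let p be a prime and N a finite p-group of rank r (every subgroup of N can be generated by r elements). If p is odd and N has exponent p, or p = 2 and N has exponent dividing 4, then |N| ≤ p^s for some number s depending only on r. -/

import Mathlib

open Subgroup

/-- A finite commutative group generated by `n` elements of exponent dividing `e`
has cardinality at most `e ^ n`. -/
lemma aux_card_le_of_gen {A : Type*} [CommGroup A] [Finite A] {n e : ℕ} (he : 0 < e)
    (f : Fin n → A) (hf : Subgroup.closure (Set.range f) = ⊤)
    (hpow : ∀ a : A, a ^ e = 1) : Nat.card A ≤ e ^ n := by
  set T : Subgroup A :=
    { carrier := {a | ∃ c : Fin n → ℕ, a = ∏ i, f i ^ c i}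
      one_mem' := ⟨fun _ => 0, by simp⟩
      mul_mem' := by
        rintro a b ⟨c, rfl⟩ ⟨d, rfl⟩
        exact ⟨c + d, by simp [pow_add, Finset.prod_mul_distrib]⟩
      inv_mem' := by
        rintro a ⟨c, rfl⟩
        refine ⟨fun i => c i * (e - 1), ?_⟩
        rw [← Finset.prod_inv_distrib]
        refine Finset.prod_congr rfl fun i _ => ?_
        rw [eq_comm, eq_inv_iff_mul_eq_one, ← pow_add]
        have : c i * (e - 1) + c i = c i * e := by
          cases e with
          | zero => exact absurd he (by simp)
          | succ e' => simp [Nat.succ_sub_one, Nat.mul_succ]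
        rw [this, pow_mul, hpow] } with hT
  have hTtop : (⊤ : Subgroup A) ≤ T := by
    rw [← hf]
    refine Subgroup.closure_le T |>.2 ?_
    rintro a ⟨i, rfl⟩
    refine ⟨fun j => if j = i then 1 else 0, ?_⟩
    rw [Finset.prod_eq_single i (fun b _ hb => by simp [hb]) (by simp)]
    simp
  have hsurj : Function.Surjective
      (fun c : Fin n → Fin e => ∏ i, f i ^ (c i : ℕ)) := by
    intro a
    obtain ⟨c, rfl⟩ := hTtop (Subgroup.mem_top a)
    refine ⟨fun i => ⟨c i % e, Nat.mod_lt _ he⟩, ?_⟩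
    refine Finset.prod_congr rfl fun i _ => ?_
    conv_rhs => rw [← Nat.div_add_mod (c i) e]
    rw [pow_add, pow_mul, hpow, one_pow, one_mul]
  calc Nat.card A ≤ Nat.card (Fin n → Fin e) := Nat.card_le_card_of_surjective _ hsurj
    _ = e ^ n := by simp [Nat.card_eq_fintype_card]

lemma aux_aut_card_le {A : Type*} [Group A] [Finite A] {n : ℕ} (f : Fin n → A)
    (hf : Subgroup.closure (Set.range f) = ⊤) :
    Nat.card (MulAut A) ≤ Nat.card A ^ n := by
  have hinj : Function.Injective (fun φ : MulAut A => fun i : Fin n => φ (f i)) := by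
    intro φ ψ h
    have : φ.toMonoidHom = ψ.toMonoidHom := by
      refine MonoidHom.eq_of_eqOn_dense hf ?_
      rintro a ⟨i, rfl⟩
      exact congrFun h i
    ext a
    exact DFunLike.congr_fun this a
  calc Nat.card (MulAut A) ≤ Nat.card (Fin n → A) := Nat.card_le_card_of_injective _ hinj
    _ = Nat.card A ^ n := by rw [Nat.card_fun]; simp

open Subgroup MulAction

lemma aux_meets_center {p : ℕ} [Fact p.Prime] {Q : Type*} [Group Q] [Finite Q]
    (hQ : IsPGroup p Q) (K : Subgroup Q) [K.Normal] (hK : K ≠ ⊥) :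
    ∃ z : Q, z ∈ K ∧ z ∈ Subgroup.center Q ∧ z ≠ 1 := by
  classical
  have hG : IsPGroup p (ConjAct Q) := hQ.of_equiv ConjAct.toConjAct
  have hKp : IsPGroup p K := hQ.to_subgroup K
  haveI : Nontrivial K := Subgroup.nontrivial_iff_ne_bot K |>.2 hK
  have hdvd : p ∣ Nat.card K := by
    obtain ⟨k, hk0, hk⟩ := hKp.nontrivial_iff_card.mp inferInstance
    exact hk ▸ dvd_pow_self _ (by omega)
  have h1 : (1 : K) ∈ fixedPoints (ConjAct Q) K := by
    intro g
    ext
    rw [ConjAct.Subgroup.val_conj_smul, Subgroup.coe_one, ConjAct.smul_def]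
    group
  obtain ⟨b, hb, hb1⟩ := hG.exists_fixed_point_of_prime_dvd_card_of_fixed_point K hdvd h1
  refine ⟨(b : Q), b.2, ?_, ?_⟩
  · rw [Subgroup.mem_center_iff]
    intro q
    have := hb (ConjAct.toConjAct q)
    have hval : ConjAct.toConjAct q • (b : Q) = (b : Q) := by
      rw [← ConjAct.Subgroup.val_conj_smul, this]
    rw [ConjAct.smul_def, ConjAct.ofConjAct_toConjAct] at hval
    calc q * b = (q * b * q⁻¹) * q := by group
      _ = b * q := by rw [hval]
  · intro h
    exact hb1 (Subtype.ext (by simp [h])).symm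

/-- `rankAtMost G r` : every subgroup of `G` is generated by at most `r` elements. -/
def rankAtMost (G : Type*) [Group G] (r : ℕ) : Prop :=
  ∀ K : Subgroup G, ∃ S : Finset G, S.card ≤ r ∧ Subgroup.closure (S : Set G) = K

/-- A finite `p`-group of rank `r` and exponent `p` (`p` odd), or exponent
dividing `4` (`p = 2`), has `r`-bounded order `≤ p^s`. -/
theorem stmt10 (r : ℕ) : ∃ s : ℕ, ∀ (p : ℕ), p.Prime →
    ∀ (N : Type) [Group N] [Finite N], IsPGroup p N → rankAtMost N r →
    ((Odd p ∧ Monoid.exponent N = p) ∨ (p = 2 ∧ Monoid.exponent N ∣ 4)) →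
    Nat.card N ≤ p ^ s := by
  classical
  refine ⟨2 * r * r + 2 * r, ?_⟩
  intro p hp N _ _ hN hrank hcase
  haveI : Fact p.Prime := ⟨hp⟩
  -- every element has order dividing p ^ 2
  have hexp : Monoid.exponent N ∣ p ^ 2 := by
    rcases hcase with ⟨_, h⟩ | ⟨h2, h⟩
    · exact h ▸ dvd_pow_self p two_ne_zero
    · rw [h2]; exact h.trans (by norm_num)
  have he : ∀ a : N, a ^ (p ^ 2) = 1 := by
    intro a
    obtain ⟨k, hk⟩ := hexp
    rw [hk, pow_mul, Monoid.pow_exponent_eq_one, one_pow]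
  -- a maximal abelian normal subgroup A
  set 𝒮 : Set (Subgroup N) := {H | H.Normal ∧ ∀ a ∈ H, ∀ b ∈ H, a * b = b * a} with h𝒮
  have hbot : (⊥ : Subgroup N) ∈ 𝒮 := by
    refine ⟨inferInstance, ?_⟩
    intro a ha b hb
    rw [Subgroup.mem_bot] at ha hb
    rw [ha, hb]
  obtain ⟨A, hA𝒮, hAmax⟩ := Set.Finite.exists_maximalFor id 𝒮 (Set.toFinite _) ⟨⊥, hbot⟩
  haveI hAnormal : A.Normal := hA𝒮.1
  have hAcomm := hA𝒮.2
  have hAleC : A ≤ Subgroup.centralizer (A : Set N) := fun a ha =>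
    Subgroup.mem_centralizer_iff.2 fun h hh => hAcomm h hh a ha
  -- A is self-centralizing
  have hC : Subgroup.centralizer (A : Set N) = A := by
    refine le_antisymm ?_ hAleC
    by_contra hne
    -- pick x in C \ A central modulo A
    have hCnormal : (Subgroup.centralizer (A : Set N)).Normal := by
      constructor
      intro c hc g
      rw [Subgroup.mem_centralizer_iff] at hc ⊢
      intro h hh
      have hh' : g⁻¹ * h * g ∈ A := by
        have := hAnormal.conj_mem h hh g⁻¹
        simpa using this
      have := hc _ hh'
      -- (g⁻¹ h g) c = c (g⁻¹ h g)  →  h (g c g⁻¹) = (g c g⁻¹) h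
      have := congrArg (fun y => g * y * g⁻¹) this
      simpa [mul_assoc] using this
    haveI := hCnormal
    set K : Subgroup (N ⧸ A) := (Subgroup.centralizer (A : Set N)).map (QuotientGroup.mk' A) with hKdef
    haveI : K.Normal := hCnormal.map _ (QuotientGroup.mk'_surjective A)
    have hKne : K ≠ ⊥ := by
      obtain ⟨x₀, hx₀C, hx₀A⟩ := SetLike.not_le_iff_exists.1 hne
      intro hKbot
      have : (QuotientGroup.mk' A) x₀ ∈ K := Subgroup.mem_map_of_mem _ hx₀C
      rw [hKbot, Subgroup.mem_bot] at this
      exact hx₀A ((QuotientGroup.eq_one_iff x₀).1 this)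
    obtain ⟨z, hzK, hzcen, hz1⟩ := aux_meets_center (hN.to_quotient A) K hKne
    obtain ⟨x, hxC, hxz⟩ := hzK
    have hxA : x ∉ A := by
      intro hxA
      exact hz1 (hxz ▸ (QuotientGroup.eq_one_iff x).2 hxA)
    -- commutators of x lie in A
    have hxc : ∀ n : N, n * x * n⁻¹ * x⁻¹ ∈ A := by
      intro n
      rw [← QuotientGroup.eq_one_iff]
      have hcomm : ((n : N ⧸ A) : N ⧸ A) * z = z * n := by
        exact Subgroup.mem_center_iff.1 hzcen _
      have : ((n * x * n⁻¹ * x⁻¹ : N) : N ⧸ A)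
          = (n : N ⧸ A) * z * (n : N ⧸ A)⁻¹ * z⁻¹ := by
        rw [← hxz]
        push_cast
        rfl
      rw [this, hcomm]
      group
    -- the bigger abelian normal subgroup B
    set B : Subgroup N := Subgroup.closure ((A : Set N) ∪ {x}) with hBdef
    have hAB : A ≤ B := by
      calc A = Subgroup.closure (A : Set N) := (Subgroup.closure_eq A).symm
        _ ≤ B := Subgroup.closure_mono Set.subset_union_left
    have hxB : x ∈ B := Subgroup.subset_closure (Set.mem_union_right _ rfl)
    have hBleCen : B ≤ Subgroup.centralizer ((A : Set N) ∪ {x}) := by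
      rw [hBdef]
      refine (Subgroup.closure_le _).2 ?_
      rintro a (haA | rfl)
      · refine SetLike.mem_coe.2 (Subgroup.mem_centralizer_iff.2 ?_)
        rintro h (hhA | rfl)
        · exact hAcomm h hhA a haA
        · exact (Subgroup.mem_centralizer_iff.1 hxC a haA).symm
      · refine SetLike.mem_coe.2 (Subgroup.mem_centralizer_iff.2 ?_)
        rintro h (hhA | rfl)
        · exact Subgroup.mem_centralizer_iff.1 hxC h hhA
        · rfl
    have hBcomm : ∀ a ∈ B, ∀ b ∈ B, a * b = b * a := by
      intro a ha b hb
      have haB : B ≤ Subgroup.centralizer {a} := by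
        rw [hBdef]
        refine (Subgroup.closure_le _).2 ?_
        intro t ht
        refine SetLike.mem_coe.2 (Subgroup.mem_centralizer_iff.2 ?_)
        rintro h rfl
        exact (Subgroup.mem_centralizer_iff.1 (hBleCen ha) t ht).symm
      exact Subgroup.mem_centralizer_iff.1 (haB hb) a rfl
    have hBnormal : B.Normal := by
      constructor
      intro b hb g
      have : B ≤ Subgroup.comap (MulAut.conj g).toMonoidHom B := by
        rw [hBdef]
        refine (Subgroup.closure_le _).2 ?_
        intro t ht
        rcases ht with htA | htx
        · exact Subgroup.mem_comap.2 (hAB (hAnormal.conj_mem t htA g))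
        · rw [Set.mem_singleton_iff] at htx
          subst htx
          refine Subgroup.mem_comap.2 ?_
          have hx' : (MulAut.conj g).toMonoidHom t = (g * t * g⁻¹ * t⁻¹) * t := by
            simp [mul_assoc]
          rw [hx']
          exact B.mul_mem (hAB (hxc g)) hxB
      exact this hb
    have hB𝒮 : B ∈ 𝒮 := ⟨hBnormal, hBcomm⟩
    have hAeqB : A = B := le_antisymm hAB (hAmax hB𝒮 hAB)
    exact hxA (hAeqB ▸ hxB)
  -- generators of A as a subtype
  obtain ⟨S, hScard, hSclosure⟩ := hrank A
  have hSsub : (S : Set N) ⊆ (A : Set N) := by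
    rw [← hSclosure]
    exact Subgroup.subset_closure
  set f : Fin r → N := fun i =>
    if h : (i : ℕ) < S.card then ((S.equivFin.symm ⟨i, h⟩ : S) : N) else 1 with hfdef
  have hfA : ∀ i, f i ∈ A := by
    intro i
    rw [hfdef]
    dsimp only
    split
    · exact hSsub (S.equivFin.symm _).2
    · exact A.one_mem
  have hfclosure : Subgroup.closure (Set.range f) = A := by
    refine le_antisymm ((Subgroup.closure_le _).2 ?_) ?_
    · rintro a ⟨i, rfl⟩
      exact hfA i
    · rw [← hSclosure]
      refine Subgroup.closure_mono ?_
      intro s hs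
      refine ⟨⟨(S.equivFin ⟨s, hs⟩ : ℕ), lt_of_lt_of_le (S.equivFin ⟨s, hs⟩).2 hScard⟩, ?_⟩
      rw [hfdef]
      dsimp only
      rw [dif_pos (S.equivFin ⟨s, hs⟩).2]
      congr
      · simp
  set f' : Fin r → A := fun i => ⟨f i, hfA i⟩ with hf'def
  have hf'top : Subgroup.closure (Set.range f') = (⊤ : Subgroup A) := by
    apply Subgroup.map_injective A.subtype_injective
    rw [MonoidHom.map_closure]
    have himg : A.subtype '' Set.range f' = Set.range f := by
      ext y
      constructor
      · rintro ⟨⟨y', hy'⟩, ⟨i, hi⟩, rfl⟩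
        exact ⟨i, by rw [← hi]; rfl⟩
      · rintro ⟨i, rfl⟩
        exact ⟨f' i, ⟨i, rfl⟩, rfl⟩
    rw [himg, hfclosure]
    rw [← MonoidHom.range_eq_map, Subgroup.range_subtype]
  -- A is commutative
  letI : CommGroup A :=
    { (inferInstance : Group A) with
      mul_comm := fun a b => Subtype.ext (hAcomm a a.2 b b.2) }
  have hpe : 0 < p ^ 2 := pow_pos hp.pos 2
  have hApow : ∀ a : A, a ^ (p ^ 2) = 1 := by
    intro a
    ext
    push_cast
    exact he (a : N)
  have hcardA : Nat.card A ≤ (p ^ 2) ^ r := aux_card_le_of_gen hpe f' hf'top hApow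
  haveI : Finite (MulAut A) :=
    Finite.of_injective (fun φ : MulAut A => (φ : A → A)) DFunLike.coe_injective
  have hcardAut : Nat.card (MulAut A) ≤ Nat.card A ^ r := aux_aut_card_le f' hf'top
  -- the kernel of conjugation is the centralizer = A
  have hker : (MulAut.conjNormal : N →* MulAut A).ker = A := by
    rw [show (MulAut.conjNormal : N →* MulAut A).ker = Subgroup.centralizer (A : Set N) from ?_, hC]
    ext g
    rw [MonoidHom.mem_ker, Subgroup.mem_centralizer_iff]
    constructor
    · intro hg h hh
      have := congrArg (Subtype.val) (MulEquiv.ext_iff.1 hg ⟨h, hh⟩)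
      simp only [MulAut.conjNormal_apply, MulAut.one_apply] at this
      calc h * g = g * (g⁻¹ * h * g) := by group
        _ = g * h := by
            congr 1
            have := congrArg (fun y => g⁻¹ * y * g) this
            simpa [mul_assoc] using this.symm
    · intro hg
      ext h
      simp only [MulAut.conjNormal_apply, MulAut.one_apply]
      have := hg (h : N) h.2
      calc g * (h : N) * g⁻¹ = (h : N) * g * g⁻¹ := by rw [← this]
        _ = h := by group
  -- assemble the bound
  have hcards := Subgroup.card_eq_card_quotient_mul_card_subgroup
    (MulAut.conjNormal : N →* MulAut A).ker
  have hquot : Nat.card (N ⧸ (MulAut.conjNormal : N →* MulAut A).ker)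
      ≤ Nat.card (MulAut A) :=
    Nat.card_le_card_of_injective _ (QuotientGroup.kerLift_injective _)
  have hkercard : Nat.card (MulAut.conjNormal : N →* MulAut A).ker = Nat.card A := by
    rw [hker]
  calc Nat.card N
      = Nat.card (N ⧸ (MulAut.conjNormal : N →* MulAut A).ker)
        * Nat.card (MulAut.conjNormal : N →* MulAut A).ker := hcards
    _ ≤ Nat.card (MulAut A) * Nat.card A := by
        rw [hkercard]; exact Nat.mul_le_mul_right _ hquot
    _ ≤ (Nat.card A) ^ r * Nat.card A := Nat.mul_le_mul_right _ hcardAut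
    _ ≤ ((p ^ 2) ^ r) ^ r * (p ^ 2) ^ r := by
        exact Nat.mul_le_mul (Nat.pow_le_pow_left hcardA r) hcardA
    _ = p ^ (2 * r * r + 2 * r) := by ring
    _ = p ^ (2 * r * r + 2 * r) := rfl
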